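/- Suppose r : ℤ/fℤ → ℤ satisfies −p ≤ r_i ≤ p for all i and p^f − 1 divides Σ_{i=0}^{f−1} p^{f−1−i}·r_i. Then for every i the following local conditions hold: r_i ∈ {−p, −(p−1), −1, 0, 1, p−1, p}; if r_i ∈ {−1, p−1} then r_{i+1} ∈ {p−1, p}; if r_i ∈ {1, −(p−1)} then r_{i+1} ∈ {−(p−1), −p}; and if r_i ∈ {−p, 0, p} then r_{i+1} ∈ {−1, 0, 1}. (These local conditions are equivalent to the assertion that either r is constantly p−1, or constantly −(p−1), or the cyclic list (r_0, …, r_{f−1}) breaks up into strings of the form ±(−1, p−1, …, p−1, p), possibly with no occurrence of p−1, and strings of the form (0, …, 0).) -/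

import Mathlib

/-- Lemma 3.6 of the paper (Lemma 7.1 of Gee–Liu–Savitt), stated via local conditions:
if `−p ≤ r_i ≤ p` for all `i` and `p^f − 1` divides `Σ_{i=0}^{f−1} p^{f−1−i}·r_i`, then every
`r_i` lies in `{−p, −(p−1), −1, 0, 1, p−1, p}` and the successor conditions hold. -/
theorem stmt0 (p f : ℕ) (hp : p.Prime) (hodd : Odd p) (hf : 1 ≤ f)
    (r : ZMod f → ℤ)
    (hbd : ∀ i : ZMod f, -(p : ℤ) ≤ r i ∧ r i ≤ (p : ℤ))
    (hdvd : ((p : ℤ) ^ f - 1) ∣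
      ∑ i ∈ Finset.range f, (p : ℤ) ^ (f - 1 - i) * r (i : ZMod f)) :
    ∀ i : ZMod f,
      (r i = -(p : ℤ) ∨ r i = -((p : ℤ) - 1) ∨ r i = -1 ∨ r i = 0 ∨ r i = 1 ∨
        r i = (p : ℤ) - 1 ∨ r i = (p : ℤ)) ∧
      ((r i = -1 ∨ r i = (p : ℤ) - 1) → (r (i + 1) = (p : ℤ) - 1 ∨ r (i + 1) = (p : ℤ))) ∧
      ((r i = 1 ∨ r i = -((p : ℤ) - 1)) →
        (r (i + 1) = -((p : ℤ) - 1) ∨ r (i + 1) = -(p : ℤ))) ∧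
      ((r i = -(p : ℤ) ∨ r i = 0 ∨ r i = (p : ℤ)) →
        (r (i + 1) = -1 ∨ r (i + 1) = 0 ∨ r (i + 1) = 1)) := by
  haveI : NeZero f := ⟨by omega⟩
  have hp3 : (3 : ℤ) ≤ (p : ℤ) := by
    have h2 := hp.two_le
    have : p ≠ 2 := by rintro rfl; have := Nat.odd_iff.mp hodd; omega
    exact_mod_cast (by omega : 3 ≤ p)
  set q : ℤ := (p : ℤ) ^ f - 1 with hq_def
  have hG : (∑ i ∈ Finset.range f, (p:ℤ)^i) * ((p:ℤ) - 1) = q := geom_sum_mul _ _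
  have hG1 : (1:ℤ) ≤ ∑ i ∈ Finset.range f, (p:ℤ)^i := by
    calc (1:ℤ) = ∑ i ∈ Finset.range 1, (p:ℤ)^i := by simp
    _ ≤ _ := Finset.sum_le_sum_of_subset_of_nonneg (by simpa using (by omega : 0 < f))
        (fun i _ _ => by positivity)
  have hq0 : 0 < q := by nlinarith
  set S : ZMod f → ℤ := fun j => ∑ i ∈ Finset.range f, (p:ℤ)^(f-1-i) * r (j + (i : ZMod f))
    with hS_def
  -- key identity
  have key : ∀ j : ZMod f, (p:ℤ) * S j = q * r j + S (j + 1) := by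
    intro j
    obtain ⟨g, rfl⟩ : ∃ g, f = g + 1 := ⟨f - 1, by omega⟩
    simp only [hS_def]
    rw [Finset.mul_sum, Finset.sum_range_succ'
      (fun i => (p:ℤ) * ((p:ℤ)^(g+1-1-i) * r (j + (i : ZMod (g+1))))),
      Finset.sum_range_succ (fun i => (p:ℤ)^(g+1-1-i) * r (j + 1 + (i : ZMod (g+1))))]
    have hlast : j + 1 + ((g : ℕ) : ZMod (g+1)) = j := by
      have : ((g : ℕ) : ZMod (g+1)) = -1 := by
        have : ((g+1 : ℕ) : ZMod (g+1)) = 0 := by simp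
        push_cast at this ⊢
        linear_combination this
      rw [this]; ring
    rw [hlast]
    have hsum : ∀ i ∈ Finset.range g,
        (p:ℤ) * ((p:ℤ)^(g+1-1-(i+1)) * r (j + ((i+1 : ℕ) : ZMod (g+1))))
        = (p:ℤ)^(g+1-1-i) * r (j + 1 + (i : ZMod (g+1))) := by
      intro i hi
      simp only [Finset.mem_range] at hi
      have h1 : j + ((i+1 : ℕ) : ZMod (g+1)) = j + 1 + (i : ZMod (g+1)) := by
        push_cast; ring
      have h2 : g+1-1-i = (g+1-1-(i+1)) + 1 := by omega
      rw [h1, h2, pow_succ]; ring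
    rw [Finset.sum_congr rfl hsum]
    have : j + ((0:ℕ) : ZMod (g+1)) = j := by simp
    rw [this]
    have : g + 1 - 1 - 0 = g := by omega
    rw [this]
    have hgg : g + 1 - 1 - g = 0 := by omega
    rw [hgg, pow_zero, one_mul]
    simp only [hq_def, pow_succ]
    ring
  -- all shifted sums divisible
  have hdvd_all : ∀ j : ZMod f, q ∣ S j := by
    have hnat : ∀ n : ℕ, q ∣ S (n : ZMod f) := by
      intro n
      induction n with
      | zero =>
        have : S ((0:ℕ) : ZMod f) = ∑ i ∈ Finset.range f, (p:ℤ)^(f-1-i) * r (i : ZMod f) := by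
          simp [hS_def]
        rw [this]; exact hdvd
      | succ n ih =>
        have hk := key ((n : ℕ) : ZMod f)
        have : ((n+1 : ℕ) : ZMod f) = ((n : ℕ) : ZMod f) + 1 := by push_cast; ring
        rw [this]
        have : S (((n : ℕ) : ZMod f) + 1) = (p:ℤ) * S ((n:ℕ) : ZMod f) - q * r ((n:ℕ) : ZMod f) := by
          linarith [hk]
        rw [this]
        exact dvd_sub (Dvd.dvd.mul_left ih _) (Dvd.dvd.mul_right dvd_rfl _)
    intro j
    have := hnat j.val
    rwa [ZMod.natCast_val, ZMod.cast_id] at this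
  -- bound on S
  have hSbd : ∀ j : ZMod f, |S j| < 2 * q := by
    intro j
    have h1 : |S j| ≤ ∑ i ∈ Finset.range f, (p:ℤ)^(f-1-i) * p := by
      refine (Finset.abs_sum_le_sum_abs _ _).trans (Finset.sum_le_sum fun i hi => ?_)
      rw [abs_mul]
      have hpow : |(p:ℤ)^(f-1-i)| = (p:ℤ)^(f-1-i) := abs_of_nonneg (by positivity)
      rw [hpow]
      have := hbd (j + (i : ZMod f))
      have habs : |r (j + (i : ZMod f))| ≤ (p:ℤ) := abs_le.mpr ⟨this.1, this.2⟩
      exact mul_le_mul_of_nonneg_left habs (by positivity)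
    have h2 : ∑ i ∈ Finset.range f, (p:ℤ)^(f-1-i) * p
        = (∑ i ∈ Finset.range f, (p:ℤ)^i) * p := by
      rw [← Finset.sum_mul]
      congr 1
      exact Finset.sum_range_reflect (fun i => (p:ℤ)^i) f
    rw [h2] at h1
    nlinarith [hG1]
  -- define k
  set k : ZMod f → ℤ := fun j => S j / q with hk_def
  have hSk : ∀ j, S j = q * k j := fun j => (Int.mul_ediv_cancel' (hdvd_all j)).symm
  have hkbd : ∀ j, -1 ≤ k j ∧ k j ≤ 1 := by
    intro j
    have h := hSbd j
    rw [hSk j, abs_mul, abs_of_pos hq0] at h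
    have : |k j| < 2 := by
      by_contra hcon
      push_neg at hcon
      nlinarith
    constructor <;> [linarith [neg_abs_le (k j)]; linarith [le_abs_self (k j)]]
  have hr : ∀ j, r j = (p:ℤ) * k j - k (j + 1) := by
    intro j
    have h := key j
    rw [hSk j, hSk (j+1)] at h
    have : q * ((p:ℤ) * k j - k (j+1)) = q * r j := by ring_nf; ring_nf at h; linarith
    have := mul_left_cancel₀ (ne_of_gt hq0) this
    omega
  intro i
  have h1 := hr i
  have h2 := hr (i + 1)
  have ha := hkbd i
  have hb := hkbd (i + 1)
  have hc := hkbd (i + 1 + 1)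
  have hbi := hbd i
  have hbi1 := hbd (i + 1)
  set a := k i
  set b := k (i + 1)
  set c := k (i + 1 + 1)
  obtain ⟨ha1, ha2⟩ := ha
  obtain ⟨hb1, hb2⟩ := hb
  obtain ⟨hc1, hc2⟩ := hc
  interval_cases a <;> interval_cases b <;> interval_cases c <;> omega
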